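/- The linear functional Tr on 𝒜 = A₁ ⋊ ℤ₂ defined by Tr(f₁(y) + f₂(y)κ) = f₂(0) is a trace: Tr(a ⋆ b) = Tr(b ⋆ a) for all a, b ∈ 𝒜. -/

import Mathlib

/- STATEMENT 12: The linear functional Tr on 𝒜 = A₁ ⋊ ℤ₂ defined by
Tr(f₁(y) + f₂(y)κ) = f₂(0) is a trace: Tr(a ⋆ b) = Tr(b ⋆ a).
Elements of 𝒜 are represented as pairs (f₁, f₂) = f₁ + f₂ κ of Weyl–Moyal
polynomials; the Klein operator κ satisfies κ² = 1, κ f(y) κ = f(−y), which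
gives the multiplication rule
  (a + bκ)(c + dκ) = (a⋆c + b⋆π(d)) + (a⋆d + b⋆π(c))κ,  π(f)(y) = f(−y). -/

open MvPolynomial

noncomputable section

abbrev P2 := MvPolynomial (Fin 2) ℂ
abbrev P4 := MvPolynomial (Fin 4) ℂ

/-- embed the first factor: variables `y₁` ↦ variables 0,1 -/
def emb1 : Fin 2 → Fin 4 := fun i => Fin.castLE (by omega) i

/-- embed the second factor: variables `y₂` ↦ variables 2,3 -/
def emb2 : Fin 2 → Fin 4 := fun i => i.addNat 2

/-- identify both groups of variables with `y` (evaluation at `y₁ = y₂ = 0`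
after the shift by `y`). -/
def collapse : Fin 4 → Fin 2 := ![0, 1, 0, 1]

/-- the symplectic bidifferential `−∂_{y₁}ᵅ ε_{αβ} ∂_{y₂}ᵝ
  = ∂_{1,2}∂_{2,1} − ∂_{1,1}∂_{2,2}` acting on the doubled variables. -/
def moyalOp : P4 →ₗ[ℂ] P4 :=
  (pderiv (1 : Fin 4) :
      Derivation ℂ P4 P4).toLinearMap ∘ₗ (pderiv (2 : Fin 4) :
      Derivation ℂ P4 P4).toLinearMap
    - (pderiv (0 : Fin 4) :
      Derivation ℂ P4 P4).toLinearMap ∘ₗ (pderiv (3 : Fin 4) :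
      Derivation ℂ P4 P4).toLinearMap

/-- the Weyl–Moyal star product: `exp[p₁·p₂] f(y+y₁)g(y+y₂)|_{y₁=y₂=0}`.
The exponential series is finite on polynomials; all terms beyond
`totalDegree f + totalDegree g` vanish. -/
def moyalStar (f g : P2) : P2 :=
  ∑ n ∈ Finset.range (f.totalDegree + g.totalDegree + 1),
    ((n.factorial : ℂ))⁻¹ •
      rename collapse ((moyalOp ^ n) (rename emb1 f * rename emb2 g))

/-- the automorphism `π (f)(y) = f(-y)`. -/
def piNeg (f : P2) : P2 := aeval (fun i : Fin 2 => - (X i : P2)) f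

/-- multiplication on `𝒜 = A₁ ⋊ ℤ₂`, elements written as pairs `f₁ + f₂ κ`. -/
def smashMul (x y : P2 × P2) : P2 × P2 :=
  (moyalStar x.1 y.1 + moyalStar x.2 (piNeg y.2),
   moyalStar x.1 y.2 + moyalStar x.2 (piNeg y.1))

/-- `Tr (f₁ + f₂ κ) = f₂(0)`. -/
def TrSmash (x : P2 × P2) : ℂ := constantCoeff x.2

-- auxiliary
def sVal : Fin 4 → P4 := ![-X 2, -X 3, X 0, X 1]
def sMap : P4 →ₐ[ℂ] P4 := aeval sVal
def tau : Fin 4 → Fin 4 := ![2, 3, 0, 1]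
def epsS : Fin 4 → ℂ := ![1, 1, -1, -1]

lemma pderiv_comm4 (i j : Fin 4) (p : P4) :
    pderiv i (pderiv j p) = pderiv j (pderiv i p) := by
  induction p using MvPolynomial.induction_on with
  | C a => simp
  | add p q hp hq => simp [hp, hq]
  | mul_X p k hp =>
    have hz : ∀ a b : Fin 4, pderiv a (pderiv b (X k : P4)) = 0 := by
      intro a b
      by_cases h : k = b
      · subst h; rw [pderiv_X_self]; simp
      · rw [pderiv_X_of_ne h]; simp
    simp only [pderiv_mul, map_add, pderiv_mul, hp, hz]
    ring

lemma pderiv_sVal (i j : Fin 4) :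
    pderiv i (sVal j) = if j = tau i then C (epsS i) else 0 := by
  fin_cases i <;> fin_cases j <;>
    simp [sVal, tau, epsS, pderiv_X, Pi.single_apply]

lemma pderiv_sMap (i : Fin 4) (p : P4) :
    pderiv i (sMap p) = C (epsS i) * sMap (pderiv (tau i) p) := by
  induction p using MvPolynomial.induction_on with
  | C a => simp [sMap]
  | add p q hp hq => simp [map_add, hp, hq]; ring
  | mul_X p j hp =>
    have hx : sMap (X j) = sVal j := aeval_X _ j
    by_cases h : j = tau i
    · subst h
      have hX : pderiv (tau i) (X (tau i) : P4) = 1 := pderiv_X_self _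
      simp only [map_mul, pderiv_mul, hp, hx, pderiv_sVal, if_pos rfl, hX, mul_one, map_add,
        map_mul, if_true]
      ring
    · have hX : pderiv (tau i) (X j : P4) = 0 := pderiv_X_of_ne h
      simp only [map_mul, pderiv_mul, hp, hx, pderiv_sVal, if_neg h, hX, mul_zero, add_zero,
        map_mul]
      ring

lemma moyalOp_sMap (p : P4) : moyalOp (sMap p) = sMap (moyalOp p) := by
  have e0 : epsS 0 = 1 := rfl
  have e1 : epsS 1 = 1 := rfl
  have e2 : epsS 2 = -1 := rfl
  have e3 : epsS 3 = -1 := rfl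
  have t0 : tau 0 = 2 := rfl
  have t1 : tau 1 = 3 := rfl
  have t2 : tau 2 = 0 := rfl
  have t3 : tau 3 = 1 := rfl
  simp only [moyalOp, LinearMap.sub_apply, LinearMap.comp_apply, Derivation.coeFn_coe]
  rw [pderiv_sMap 2 p, t2, e2, pderiv_C_mul, pderiv_sMap 1, t1, e1,
      pderiv_sMap 3 p, t3, e3, pderiv_C_mul, pderiv_sMap 0, t0, e0,
      pderiv_comm4 3 0, pderiv_comm4 2 1]
  simp only [map_sub, map_neg, map_one]
  ring

lemma moyalOp_pow_sMap (n : ℕ) (p : P4) :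
    (moyalOp ^ n) (sMap p) = sMap ((moyalOp ^ n) p) := by
  induction n generalizing p with
  | zero => simp
  | succ n ih =>
    rw [pow_succ, Module.End.mul_apply, Module.End.mul_apply, moyalOp_sMap, ih]

lemma constantCoeff_sMap (p : P4) :
    constantCoeff (sMap p) = constantCoeff p := by
  induction p using MvPolynomial.induction_on with
  | C a => simp [sMap]
  | add p q hp hq => simp [map_add, hp, hq]
  | mul_X p j hp =>
    have hx : sMap (X j) = sVal j := aeval_X _ j
    have : constantCoeff (sVal j) = 0 := by fin_cases j <;> simp [sVal]
    simp [map_mul, hx, this]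

lemma sMap_rename1 (f : P2) : sMap (rename emb1 f) = rename emb2 (piNeg f) := by
  show aeval sVal (rename emb1 f) = _
  rw [aeval_rename, piNeg, ← AlgHom.comp_apply, comp_aeval]
  have h : (sVal ∘ emb1) = fun i : Fin 2 => (rename emb2) (-(X i : P2)) := by
    funext i
    fin_cases i <;> simp [sVal, emb1, emb2] <;> rfl
  rw [h]

lemma sMap_rename2 (g : P2) : sMap (rename emb2 g) = rename emb1 g := by
  show aeval sVal (rename emb2 g) = _
  rw [aeval_rename]
  have h : (sVal ∘ emb2) = (X ∘ emb1 : Fin 2 → P4) := by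
    funext i
    fin_cases i <;> simp [sVal, emb1, emb2] <;> rfl
  rw [h, ← aeval_rename, aeval_X_left_apply]

lemma piNeg_monomial (d : Fin 2 →₀ ℕ) (c : ℂ) :
    piNeg (monomial d c) = (-1 : ℂ) ^ (d.sum fun _ e => e) • monomial d c := by
  rw [piNeg, aeval_monomial]
  have key : (d.prod fun n e => (-(X n : P2)) ^ e)
      = (-1 : P2) ^ (d.sum fun _ e => e) * d.prod fun n e => (X n : P2) ^ e := by
    rw [Finsupp.prod, Finsupp.prod, Finsupp.sum, ← Finset.prod_pow_eq_pow_sum,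
      ← Finset.prod_mul_distrib]
    exact Finset.prod_congr rfl fun i _ => by rw [neg_pow]
  rw [key, monomial_eq, smul_eq_C_mul]
  have hc : ((-1 : P2) ^ (d.sum fun _ e => e)) = C ((-1 : ℂ) ^ (d.sum fun _ e => e)) := by
    rw [map_pow, map_neg, map_one]
  rw [hc]
  simp only [algebraMap_eq]
  ring

lemma coeff_piNeg (m : Fin 2 →₀ ℕ) (f : P2) :
    coeff m (piNeg f) = (-1 : ℂ) ^ (m.sum fun _ e => e) * coeff m f := by
  induction f using MvPolynomial.induction_on' with
  | monomial d c =>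
    rw [piNeg_monomial, coeff_smul, coeff_monomial]
    by_cases h : d = m
    · subst h; simp [smul_eq_mul]
    · simp [h]
  | add p q hp hq =>
    have hadd : piNeg (p + q) = piNeg p + piNeg q := map_add (aeval _) p q
    rw [hadd]; simp only [coeff_add]; rw [hp, hq]
    ring

lemma support_piNeg (f : P2) : (piNeg f).support = f.support := by
  ext m
  simp only [mem_support_iff, coeff_piNeg]
  constructor
  · intro h hc; exact h (by rw [hc, mul_zero])
  · intro h hc
    exact h (by
      have := mul_eq_zero.mp hc
      rcases this with h1 | h1
      · exact absurd h1 (pow_ne_zero _ (by norm_num))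
      · exact h1)

lemma totalDegree_piNeg (f : P2) : (piNeg f).totalDegree = f.totalDegree := by
  rw [totalDegree, totalDegree, support_piNeg]

lemma cc_moyalStar_swap (f g : P2) :
    constantCoeff (moyalStar f g) = constantCoeff (moyalStar g (piNeg f)) := by
  rw [moyalStar, moyalStar, totalDegree_piNeg, add_comm g.totalDegree]
  rw [map_sum, map_sum]
  refine Finset.sum_congr rfl fun n _ => ?_
  rw [constantCoeff_smul, constantCoeff_smul, constantCoeff_rename, constantCoeff_rename]
  congr 1
  have : rename emb1 g * rename emb2 (piNeg f) = sMap (rename emb1 f * rename emb2 g) := by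
    rw [map_mul, sMap_rename1, sMap_rename2]; ring
  rw [this, moyalOp_pow_sMap, constantCoeff_sMap]

/-- `Tr` is a trace on `𝒜`. -/
theorem TrSmash_is_trace (x y : P2 × P2) :
    TrSmash (smashMul x y) = TrSmash (smashMul y x) := by
  show constantCoeff (moyalStar x.1 y.2 + moyalStar x.2 (piNeg y.1))
      = constantCoeff (moyalStar y.1 x.2 + moyalStar y.2 (piNeg x.1))
  rw [map_add, map_add, cc_moyalStar_swap x.1 y.2, cc_moyalStar_swap y.1 x.2]
  ring

end
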